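/- arXiv:2307.01481 — 2 statements merged into one kernel-verified Lean document; each statement's English description precedes it below -/
import Mathlib

section
/- Let E be a quantum operation on a d-dimensional Hilbert space with operator-sum representation E(ρ) = Σᵢ Eᵢ ρ Eᵢ†, where Σᵢ Eᵢ†Eᵢ = I. If for all indices i, j the matrix Eᵢ†Eⱼ is a scalar multiple of the identity, then E is a unitary transform: there exists a unitary U and complex numbers kᵢ with Σᵢ|kᵢ|² = 1 such that Eᵢ = kᵢU for all i. -/
open Matrix
/-- If all Eᵢ†Eⱼ are scalar multiples of the identity and Σᵢ Eᵢ†Eᵢ = I, then the quantum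
operation with Kraus operators {Eᵢ} is a unitary transform: Eᵢ = kᵢ U with Σᵢ|kᵢ|² = 1. -/
theorem kraus_scalar_implies_unitary
    {d N : ℕ} (hd : 0 < d) (E : Fin N → Matrix (Fin d) (Fin d) ℂ)
    (hcomp : ∑ i, (E i)ᴴ * E i = 1)
    (hscal : ∀ i j, ∃ c : ℂ, (E i)ᴴ * E j = c • (1 : Matrix (Fin d) (Fin d) ℂ)) :
    ∃ (U : Matrix (Fin d) (Fin d) ℂ) (k : Fin N → ℂ),
      U ∈ Matrix.unitaryGroup (Fin d) ℂ ∧ (∑ i, ‖k i‖ ^ 2 = 1) ∧ ∀ i, E i = k i • U := by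
  classical
  choose c hc using hscal
  set x0 : Fin d := ⟨0, hd⟩
  -- sum of diagonal coefficients is 1
  have hsum : ∑ i, c i i = 1 := by
    have := congrFun (congrFun hcomp x0) x0
    simp only [Matrix.sum_apply] at this
    simpa [hc, Matrix.smul_apply, Matrix.one_apply] using this
  -- there is an index with c i i ≠ 0
  have hex : ∃ i₀, c i₀ i₀ ≠ 0 := by
    by_contra h
    push_neg at h
    simp [h] at hsum
  obtain ⟨i₀, hne⟩ := hex
  -- c i₀ i₀ is a nonnegative real
  have hdiag : ∀ i, (c i i : ℂ) = ((∑ k, Complex.normSq (E i k x0) : ℝ) : ℂ) := by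
    intro i
    have := congrFun (congrFun (hc i i) x0) x0
    simp only [Matrix.mul_apply, Matrix.conjTranspose_apply, Matrix.smul_apply,
      Matrix.one_apply_eq, smul_eq_mul, mul_one] at this
    rw [← this]
    push_cast
    refine Finset.sum_congr rfl fun k _ => ?_
    rw [Complex.star_def, ← Complex.normSq_eq_conj_mul_self]
  set r : ℝ := ∑ k, Complex.normSq (E i₀ k x0) with hr
  have hcr : c i₀ i₀ = (r : ℂ) := hdiag i₀
  have hrpos : 0 < r := by
    rcases lt_or_eq_of_le (Finset.sum_nonneg fun k _ => Complex.normSq_nonneg (E i₀ k x0)) with h | h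
    · exact h
    · have hz : r = 0 := by rw [hr, ← h]
      exact absurd (by rw [hcr, hz]; simp) hne
  set s : ℝ := Real.sqrt r with hs
  have hspos : 0 < s := Real.sqrt_pos.mpr hrpos
  have hss : (s : ℝ) * s = r := Real.mul_self_sqrt hrpos.le
  set U : Matrix (Fin d) (Fin d) ℂ := ((s⁻¹ : ℝ) : ℂ) • E i₀ with hU
  have hstarU : star U = ((s⁻¹ : ℝ) : ℂ) • (E i₀)ᴴ := by
    simp [hU, Matrix.star_eq_conjTranspose, Matrix.conjTranspose_smul, Complex.conj_ofReal]
  have key : star U * U = 1 := by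
    rw [hstarU, hU, smul_mul_assoc, mul_smul_comm, hc, hcr, smul_smul, smul_smul]
    have hreal : (s⁻¹ * s⁻¹ * r : ℝ) = 1 := by
      rw [← hss]; field_simp
    have h1 : ((s⁻¹ : ℝ) : ℂ) * ((s⁻¹ : ℝ) : ℂ) * ((r : ℝ) : ℂ) = 1 := by
      exact_mod_cast congrArg Complex.ofReal hreal
    rw [h1, one_smul]
  have hUmem : U ∈ Matrix.unitaryGroup (Fin d) ℂ := by
    rw [Matrix.mem_unitaryGroup_iff]
    rw [mul_eq_one_comm] at key
    exact key
  have hUU : U * star U = 1 := by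
    rw [mul_eq_one_comm] at key; exact key
  set k : Fin N → ℂ := fun i => ((s⁻¹ : ℝ) : ℂ) * c i₀ i with hk
  have hEk : ∀ i, E i = k i • U := by
    intro i
    have h1 : star U * E i = k i • (1 : Matrix (Fin d) (Fin d) ℂ) := by
      rw [hstarU, smul_mul_assoc, hc, smul_smul, hk]
    calc E i = (U * star U) * E i := by rw [hUU, one_mul]
    _ = U * (star U * E i) := by rw [mul_assoc]
    _ = U * (k i • 1) := by rw [h1]
    _ = k i • U := by rw [mul_smul_comm, mul_one]
  -- norms
  have hnorm : ∀ i, ((‖k i‖ ^ 2 : ℝ) : ℂ) = c i i := by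
    intro i
    have h2 : (E i)ᴴ * E i = (star (k i) * k i) • (1 : Matrix (Fin d) (Fin d) ℂ) := by
      rw [hEk i, Matrix.conjTranspose_smul, smul_mul_assoc, mul_smul_comm,
        ← Matrix.star_eq_conjTranspose, key, smul_smul]
    rw [hc] at h2
    have := congrFun (congrFun h2 x0) x0
    simp only [Matrix.smul_apply, Matrix.one_apply_eq, smul_eq_mul, mul_one] at this
    rw [this, Complex.star_def, ← Complex.normSq_eq_conj_mul_self,
      Complex.normSq_eq_norm_sq]
  refine ⟨U, k, hUmem, ?_, hEk⟩
  have : ((∑ i, ‖k i‖ ^ 2 : ℝ) : ℂ) = 1 := by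
    rw [Complex.ofReal_sum]
    exact (Finset.sum_congr rfl fun i _ => hnorm i).trans hsum
  exact_mod_cast this
end

section
/- Let E be a trace-preserving quantum operation on a d-dimensional Hilbert space with orthonormal basis {|1⟩,...,|d⟩}, and define |±_{mn}⟩ = (|m⟩ ± |n⟩)/√2 for m ≠ n. Then E is a unitary transform if and only if (1) tr[E(|m⟩⟨m|)·E(|n⟩⟨n|)] = 0 for all m ≠ n, and (2) tr[E(|+_{mn}⟩⟨+_{mn}|)·E(|−_{mn}⟩⟨−_{mn}|)] = 0 for d−1 pairs (m,n) with m ≠ n forming the edges of a connected graph on the vertex set {1,...,d}. -/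
open Matrix

/-- The quantum operation determined by Kraus operators `K`: ρ ↦ Σᵢ Kᵢ ρ Kᵢ†. -/
noncomputable def krausMap {d N : ℕ} (K : Fin N → Matrix (Fin d) (Fin d) ℂ)
    (ρ : Matrix (Fin d) (Fin d) ℂ) : Matrix (Fin d) (Fin d) ℂ :=
  ∑ i, K i * ρ * (K i)ᴴ

/-- The unit vector |+_{mn}⟩ = (|m⟩ + |n⟩)/√2. -/
noncomputable def plusVec {d : ℕ} (m n : Fin d) : Fin d → ℂ :=
  fun i => ((if i = m then 1 else 0) + (if i = n then 1 else 0)) / Real.sqrt 2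

/-- The unit vector |−_{mn}⟩ = (|m⟩ − |n⟩)/√2. -/
noncomputable def minusVec {d : ℕ} (m n : Fin d) : Fin d → ℂ :=
  fun i => ((if i = m then 1 else 0) - (if i = n then 1 else 0)) / Real.sqrt 2

section Helpers

lemma conj_vecMulVec {d : ℕ} (M : Matrix (Fin d) (Fin d) ℂ) (x : Fin d → ℂ) :
    M * vecMulVec x (star x) * Mᴴ = vecMulVec (M *ᵥ x) (star (M *ᵥ x)) := by
  ext a b
  simp only [Matrix.mul_apply, vecMulVec_apply, Pi.star_apply, mulVec, dotProduct,
    conjTranspose_apply, Finset.sum_mul, Finset.mul_sum, star_sum, star_mul']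
  apply Finset.sum_congr rfl; intro q _
  apply Finset.sum_congr rfl; intro p _
  ring

lemma trace_vecMulVec_mul {d : ℕ} (a b : Fin d → ℂ) :
    Matrix.trace (vecMulVec a (star a) * vecMulVec b (star b))
      = Complex.normSq (star a ⬝ᵥ b) := by
  simp only [Matrix.trace, Matrix.diag_apply, Matrix.mul_apply, vecMulVec_apply, Pi.star_apply,
    dotProduct]
  rw [Complex.normSq_eq_conj_mul_self]
  rw [map_sum]
  rw [Finset.sum_mul_sum]
  apply Finset.sum_congr rfl; intro k _
  apply Finset.sum_congr rfl; intro l _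
  simp only [starRingEnd_apply, StarMul.star_mul, star_star]
  ring

lemma trace_kraus_eq {d N : ℕ} (K : Fin N → Matrix (Fin d) (Fin d) ℂ) (x y : Fin d → ℂ) :
    Matrix.trace (krausMap K (vecMulVec x (star x)) * krausMap K (vecMulVec y (star y)))
      = ∑ i, ∑ j, (Complex.normSq (star (K i *ᵥ x) ⬝ᵥ (K j *ᵥ y)) : ℂ) := by
  unfold krausMap
  rw [Finset.sum_mul_sum]
  rw [Matrix.trace_sum]
  apply Finset.sum_congr rfl; intro i _
  rw [Matrix.trace_sum]
  apply Finset.sum_congr rfl; intro j _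
  rw [conj_vecMulVec, conj_vecMulVec, trace_vecMulVec_mul]

lemma trace_kraus_zero_iff {d N : ℕ} (K : Fin N → Matrix (Fin d) (Fin d) ℂ) (x y : Fin d → ℂ) :
    Matrix.trace (krausMap K (vecMulVec x (star x)) * krausMap K (vecMulVec y (star y))) = 0
      ↔ ∀ i j, star (K i *ᵥ x) ⬝ᵥ (K j *ᵥ y) = 0 := by
  rw [trace_kraus_eq]
  rw [show (∑ i, ∑ j, ((Complex.normSq (star (K i *ᵥ x) ⬝ᵥ (K j *ᵥ y)) : ℝ) : ℂ))
      = ((∑ i, ∑ j, Complex.normSq (star (K i *ᵥ x) ⬝ᵥ (K j *ᵥ y)) : ℝ) : ℂ) by push_cast; rfl]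
  rw [Complex.ofReal_eq_zero]
  rw [Finset.sum_eq_zero_iff_of_nonneg
    (fun i _ => Finset.sum_nonneg fun j _ => Complex.normSq_nonneg _)]
  constructor
  · intro h i j
    have := h i (Finset.mem_univ i)
    rw [Finset.sum_eq_zero_iff_of_nonneg (fun j _ => Complex.normSq_nonneg _)] at this
    exact Complex.normSq_eq_zero.mp (this j (Finset.mem_univ j))
  · intro h i _
    apply Finset.sum_eq_zero; intro j _
    rw [h i j, Complex.normSq_zero]

lemma sum_dot {d N : ℕ} (K : Fin N → Matrix (Fin d) (Fin d) ℂ)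
    (hcomp : ∑ i, (K i)ᴴ * K i = 1) (x y : Fin d → ℂ) :
    ∑ i, star (K i *ᵥ x) ⬝ᵥ (K i *ᵥ y) = star x ⬝ᵥ y := by
  have h : ∀ i : Fin N, star (K i *ᵥ x) ⬝ᵥ (K i *ᵥ y)
      = star x ⬝ᵥ (((K i)ᴴ * K i) *ᵥ y) := by
    intro i
    rw [star_mulVec, dotProduct_mulVec, vecMul_vecMul, ← dotProduct_mulVec]
  simp_rw [h]
  have hsum : ((∑ i, (K i)ᴴ * K i) *ᵥ y) = ∑ i, (((K i)ᴴ * K i) *ᵥ y) := by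
    ext a
    simp only [Matrix.mulVec, dotProduct, Matrix.sum_apply, Finset.sum_mul,
      Finset.sum_apply]
    exact Finset.sum_comm ..
  have h2 : ∀ f : Fin N → (Fin d → ℂ), star x ⬝ᵥ (∑ i, f i) = ∑ i, star x ⬝ᵥ f i := by
    intro f
    simp only [dotProduct, Finset.sum_apply, Finset.mul_sum]
    exact Finset.sum_comm ..
  rw [← h2, ← hsum, hcomp, Matrix.one_mulVec]

lemma plusVec_eq {d : ℕ} (m n : Fin d) :
    plusVec m n = (((Real.sqrt 2 : ℝ) : ℂ))⁻¹ • (Pi.single m 1 + Pi.single n 1) := by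
  funext a
  simp [plusVec, Pi.single_apply, div_eq_mul_inv, mul_comm]

lemma minusVec_eq {d : ℕ} (m n : Fin d) :
    minusVec m n = (((Real.sqrt 2 : ℝ) : ℂ))⁻¹ • (Pi.single m 1 - Pi.single n 1) := by
  funext a
  simp [minusVec, Pi.single_apply, div_eq_mul_inv, mul_comm]

lemma single_dot {d : ℕ} (m n : Fin d) :
    star (Pi.single m (1:ℂ)) ⬝ᵥ (Pi.single n 1) = if m = n then 1 else 0 := by
  simp [dotProduct, Pi.single_apply, apply_ite (star : ℂ → ℂ), Finset.sum_ite_eq, eq_comm]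

lemma dot_self_coe {d : ℕ} (x : Fin d → ℂ) :
    star x ⬝ᵥ x = ((∑ a, Complex.normSq (x a) : ℝ) : ℂ) := by
  simp only [dotProduct, Pi.star_apply]
  rw [Complex.ofReal_sum]
  apply Finset.sum_congr rfl; intro a _
  rw [Complex.normSq_eq_conj_mul_self]
  rfl

lemma sqrt2_ne : (((Real.sqrt 2 : ℝ) : ℂ)) ≠ 0 := by
  exact_mod_cast Complex.ofReal_ne_zero.mpr (Real.sqrt_pos.mpr (by norm_num)).ne'

lemma star_smul_dot {d : ℕ} (cc : ℂ) (x y : Fin d → ℂ) :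
    star (cc • x) ⬝ᵥ y = star cc * (star x ⬝ᵥ y) := by
  rw [star_smul, smul_dotProduct, smul_eq_mul]

lemma dot_smul' {d : ℕ} (cc : ℂ) (x y : Fin d → ℂ) :
    star x ⬝ᵥ (cc • y) = cc * (star x ⬝ᵥ y) := by
  rw [dotProduct_smul, smul_eq_mul]

lemma stdBasis_eq {d : ℕ} (m : Fin d) :
    Matrix.single m m (1:ℂ)
      = vecMulVec (Pi.single m 1) (star (Pi.single m 1)) := by
  ext a b
  by_cases ha : a = m <;> by_cases hb : b = m <;>
    simp [Matrix.single, vecMulVec_apply, Pi.single_apply, ha, hb, Ne.symm, eq_comm]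

end Helpers

/-- A trace-preserving quantum operation given in Kraus form is a unitary transform iff it
sends the pairs of orthogonal states (|m⟩,|n⟩) (all m ≠ n) and (|+_{mn}⟩,|−_{mn}⟩) (for d−1
pairs forming the edges of a connected graph on {1,…,d}) to pairs of states with zero
Hilbert–Schmidt inner product. -/
theorem unitary_iff_orthogonality_preserving
    {d N : ℕ} (hd : 0 < d) (K : Fin N → Matrix (Fin d) (Fin d) ℂ)
    (hcomp : ∑ i, (K i)ᴴ * K i = 1)
    (edges : Fin (d - 1) → Fin d × Fin d)
    (hne : ∀ e, (edges e).1 ≠ (edges e).2)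
    (hconn : (SimpleGraph.fromRel (fun a b => ∃ e, edges e = (a, b))).Connected) :
    (∃ U : Matrix (Fin d) (Fin d) ℂ, U ∈ Matrix.unitaryGroup (Fin d) ℂ ∧
        ∀ ρ : Matrix (Fin d) (Fin d) ℂ, krausMap K ρ = U * ρ * Uᴴ) ↔
    ((∀ m n : Fin d, m ≠ n →
        Matrix.trace (krausMap K (Matrix.single m m 1) *
          krausMap K (Matrix.single n n 1)) = 0) ∧
     (∀ e, Matrix.trace
        (krausMap K (vecMulVec (plusVec (edges e).1 (edges e).2)
            (star (plusVec (edges e).1 (edges e).2))) *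
         krausMap K (vecMulVec (minusVec (edges e).1 (edges e).2)
            (star (minusVec (edges e).1 (edges e).2)))) = 0)) := by
  constructor
  · rintro ⟨U, hU, hE⟩
    have hUc : ∑ i : Fin 1, ((fun _ : Fin 1 => U) i)ᴴ * (fun _ : Fin 1 => U) i = 1 := by
      simpa [Matrix.star_eq_conjTranspose] using
        (Matrix.mem_unitaryGroup_iff'.mp hU)
    have hE1 : ∀ ρ, krausMap K ρ = krausMap (fun _ : Fin 1 => U) ρ := by
      intro ρ
      rw [hE]
      simp [krausMap]
    have hd1 : ∀ x y : Fin d → ℂ, star (U *ᵥ x) ⬝ᵥ (U *ᵥ y) = star x ⬝ᵥ y := by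
      intro x y
      simpa using sum_dot (fun _ : Fin 1 => U) hUc x y
    constructor
    · intro m n hmn
      rw [stdBasis_eq, stdBasis_eq, hE1, hE1, trace_kraus_zero_iff]
      intro i j
      rw [hd1, single_dot, if_neg hmn]
    · intro e
      rw [hE1, hE1, trace_kraus_zero_iff]
      intro i j
      rw [hd1]
      rw [plusVec_eq, minusVec_eq, star_smul_dot, dot_smul']
      have : star ((Pi.single (edges e).1 1 + Pi.single (edges e).2 1 : Fin d → ℂ)) ⬝ᵥ
          ((Pi.single (edges e).1 1 - Pi.single (edges e).2 1 : Fin d → ℂ)) = 0 := by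
        rw [star_add, add_dotProduct, dotProduct_sub, dotProduct_sub,
          single_dot, single_dot, single_dot, single_dot]
        simp [hne e, (hne e).symm]
      rw [this, mul_zero, mul_zero]
  · rintro ⟨h1, h2⟩
    classical
    set v : Fin N → Fin d → (Fin d → ℂ) := fun i m => K i *ᵥ Pi.single m 1 with hv
    have hsumv : ∀ m n : Fin d, ∑ i, star (v i m) ⬝ᵥ v i n = if m = n then 1 else 0 := by
      intro m n
      rw [hv]
      rw [sum_dot K hcomp, single_dot]
    have F2 : ∀ m n : Fin d, m ≠ n → ∀ i j, star (v i m) ⬝ᵥ v j n = 0 := by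
      intro m n hmn i j
      have h := h1 m n hmn
      rw [stdBasis_eq, stdBasis_eq, trace_kraus_zero_iff] at h
      exact h i j
    have hex : ∀ m, ∃ i, v i m ≠ 0 := by
      intro m
      by_contra hc
      push_neg at hc
      have h := hsumv m m
      rw [if_pos rfl] at h
      rw [Finset.sum_eq_zero (fun i _ => by rw [hc i]; simp)] at h
      exact one_ne_zero h.symm
    choose i0 hi0 using hex
    set r : Fin d → ℝ := fun m => Real.sqrt (∑ a, Complex.normSq (v (i0 m) m a)) with hr
    have hrpos : ∀ m, 0 < r m := by
      intro m
      apply Real.sqrt_pos.mpr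
      have hea : ∃ a, v (i0 m) m a ≠ 0 := by
        by_contra hca
        push_neg at hca
        exact hi0 m (funext hca)
      obtain ⟨a, ha⟩ := hea
      exact Finset.sum_pos' (fun b _ => Complex.normSq_nonneg _)
        ⟨a, Finset.mem_univ a, Complex.normSq_pos.mpr ha⟩
    have hrne : ∀ m, ((r m : ℝ) : ℂ) ≠ 0 := fun m =>
      Complex.ofReal_ne_zero.mpr (hrpos m).ne'
    have hrr : ∀ m, ((r m : ℝ) : ℂ) * ((r m : ℝ) : ℂ) = star (v (i0 m) m) ⬝ᵥ v (i0 m) m := by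
      intro m
      rw [dot_self_coe, ← Complex.ofReal_mul, hr,
        Real.mul_self_sqrt (Finset.sum_nonneg fun a _ => Complex.normSq_nonneg _)]
    set ψ : Fin d → (Fin d → ℂ) := fun m => ((r m : ℝ) : ℂ)⁻¹ • v (i0 m) m with hψ
    have hψdot : ∀ m n, star (ψ m) ⬝ᵥ ψ n = if m = n then 1 else 0 := by
      intro m n
      rw [hψ]
      simp only []
      rw [star_smul_dot, dot_smul']
      by_cases hmn : m = n
      · subst hmn
        rw [if_pos rfl, ← hrr m]
        have hstar : star (((r m : ℝ) : ℂ)⁻¹) = ((r m : ℝ) : ℂ)⁻¹ := by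
          rw [star_inv₀, Complex.star_def, Complex.conj_ofReal]
        rw [hstar]
        field_simp
        exact div_self (hrne m)
      · rw [if_neg hmn, F2 m n hmn (i0 m) (i0 n), mul_zero, mul_zero]
    set c : Fin N → Fin d → ℂ := fun i m => star (ψ m) ⬝ᵥ v i m with hcdef
    set Ψ : Matrix (Fin d) (Fin d) ℂ := Matrix.of (fun a m => ψ m a) with hΨdef
    have hΨ1 : Ψᴴ * Ψ = 1 := by
      ext m n
      simp only [hΨdef, Matrix.mul_apply, conjTranspose_apply, Matrix.one_apply, Matrix.of_apply]
      have h := hψdot m n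
      simp only [dotProduct, Pi.star_apply] at h
      rw [h]
    have hΨ2 : Ψ * Ψᴴ = 1 := mul_eq_one_comm.mp hΨ1
    have hexp : ∀ a b : Fin d, (∑ m, ψ m a * star (ψ m b)) = if a = b then 1 else 0 := by
      intro a b
      have h := congrFun (congrFun hΨ2 a) b
      simpa [hΨdef, Matrix.mul_apply, conjTranspose_apply, Matrix.one_apply] using h
    have F5 : ∀ i m a, v i m a = c i m * ψ m a := by
      intro i m a
      have horth : ∀ n, n ≠ m → star (ψ n) ⬝ᵥ v i m = 0 := by
        intro n hnm
        rw [hψ]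
        simp only []
        rw [star_smul_dot, F2 n m hnm (i0 n) i, mul_zero]
      calc v i m a = ∑ b, (if a = b then 1 else 0) * v i m b := by simp
        _ = ∑ b, (∑ n, ψ n a * star (ψ n b)) * v i m b := by
              apply Finset.sum_congr rfl; intro b _
              rw [hexp]
        _ = ∑ n, ψ n a * (star (ψ n) ⬝ᵥ v i m) := by
              simp only [dotProduct, Pi.star_apply, Finset.sum_mul, Finset.mul_sum]
              rw [Finset.sum_comm]
              apply Finset.sum_congr rfl; intro n _
              apply Finset.sum_congr rfl; intro b _
              ring
        _ = c i m * ψ m a := by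
              rw [Finset.sum_eq_single m]
              · rw [hcdef]; ring
              · intro n _ hnm
                rw [horth n hnm, mul_zero]
              · intro hm
                exact absurd (Finset.mem_univ m) hm
    have hdotc : ∀ i j m, star (v i m) ⬝ᵥ v j m = star (c i m) * c j m := by
      intro i j m
      have h5 : ∀ k, v k m = c k m • ψ m := by
        intro k
        funext a
        rw [F5 k m a]
        rfl
      rw [h5 i, h5 j, star_smul_dot, dot_smul', hψdot, if_pos rfl]
      ring
    have hcnorm : ∀ m, ∑ i, star (c i m) * c i m = 1 := by
      intro m
      have h := hsumv m m
      rw [if_pos rfl] at h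
      rw [← h]
      apply Finset.sum_congr rfl; intro i _
      rw [hdotc]
    have F4 : ∀ e (i j : Fin N),
        star (c i (edges e).1) * c j (edges e).1
          = star (c i (edges e).2) * c j (edges e).2 := by
      intro e i j
      have h := h2 e
      rw [trace_kraus_zero_iff] at h
      have hz := h i j
      rw [plusVec_eq, minusVec_eq, mulVec_smul, mulVec_smul, mulVec_add, mulVec_sub,
        star_smul_dot, dot_smul'] at hz
      have ht2 : star (((Real.sqrt 2 : ℝ) : ℂ)⁻¹) ≠ 0 := by
        simpa using inv_ne_zero sqrt2_ne
      have hdot0 : star (v i (edges e).1 + v i (edges e).2) ⬝ᵥ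
          (v j (edges e).1 - v j (edges e).2) = 0 := by
        rcases mul_eq_zero.mp hz with h' | h'
        · exact absurd h' ht2
        · rcases mul_eq_zero.mp h' with h'' | h''
          · exact absurd h'' (inv_ne_zero sqrt2_ne)
          · exact h''
      rw [star_add, add_dotProduct, dotProduct_sub, dotProduct_sub,
        F2 _ _ (hne e) i j, F2 _ _ (Ne.symm (hne e)) i j,
        hdotc, hdotc] at hdot0
      linear_combination hdot0
    -- from equal Gram data to a common phase
    have hgram_to_R : ∀ m n : Fin d,
        (∀ i j : Fin N, star (c i m) * c j m = star (c i n) * c j n) →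
        ∃ l : ℂ, star l * l = 1 ∧ ∀ i, c i m = l * c i n := by
      intro m n hg
      have hexn : ∃ j0, c j0 n ≠ 0 := by
        by_contra hcon
        push_neg at hcon
        have h := hcnorm n
        rw [Finset.sum_eq_zero (fun i _ => by rw [hcon i, mul_zero])] at h
        exact one_ne_zero h.symm
      obtain ⟨j0, hj0⟩ := hexn
      have h00 := hg j0 j0
      have hj0m : c j0 m ≠ 0 := by
        intro h0
        have hzero : star (c j0 n) * c j0 n = 0 := by
          rw [← h00, h0, mul_zero]
        rcases mul_eq_zero.mp hzero with h' | h'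
        · exact hj0 (star_eq_zero.mp h')
        · exact hj0 h'
      have hsm : star (c j0 m) ≠ 0 := star_ne_zero.mpr hj0m
      refine ⟨star (c j0 n) / star (c j0 m), ?_, ?_⟩
      · rw [star_div₀, star_star, star_star, div_mul_div_comm,
          div_eq_one_iff_eq (mul_ne_zero hj0m hsm)]
        linear_combination -h00
      · intro i
        have hgi := hg j0 i
        rw [div_mul_eq_mul_div, eq_div_iff hsm]
        linear_combination hgi
    have hadjR : ∀ a b : Fin d,
        (SimpleGraph.fromRel (fun a b => ∃ e, edges e = (a, b))).Adj a b →
        ∃ l : ℂ, star l * l = 1 ∧ ∀ i, c i a = l * c i b := by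
      intro a b hab
      rw [SimpleGraph.fromRel_adj] at hab
      obtain ⟨-, h' | h'⟩ := hab
      · obtain ⟨e, he⟩ := h'
        apply hgram_to_R
        intro i j
        have := F4 e i j
        rw [he] at this
        exact this
      · obtain ⟨e, he⟩ := h'
        have hg : ∀ i j : Fin N, star (c i b) * c j b = star (c i a) * c j a := by
          intro i j
          have := F4 e i j
          rw [he] at this
          exact this
        obtain ⟨l, hl1, hl2⟩ := hgram_to_R b a hg
        refine ⟨star l, by rw [star_star]; linear_combination hl1, ?_⟩
        intro i
        rw [hl2 i, ← mul_assoc]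
        rw [show star l * l = 1 from hl1, one_mul]
    have hwalk : ∀ a b : Fin d,
        (SimpleGraph.fromRel (fun a b => ∃ e, edges e = (a, b))).Walk a b →
        ∃ l : ℂ, star l * l = 1 ∧ ∀ i, c i a = l * c i b := by
      intro a b w
      induction w with
      | nil => exact ⟨1, by simp, fun i => by simp⟩
      | cons hadj' p ih =>
          obtain ⟨l1, hl1, hc1⟩ := hadjR _ _ hadj'
          obtain ⟨l2, hl2, hc2⟩ := ih
          refine ⟨l1 * l2, ?_, fun i => by rw [hc1 i, hc2 i]; ring⟩
          calc star (l1 * l2) * (l1 * l2) = (star l1 * l1) * (star l2 * l2) := by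
                rw [StarMul.star_mul]; ring
            _ = 1 := by rw [hl1, hl2, one_mul]
    have hreach : ∀ m : Fin d, ∃ l : ℂ, star l * l = 1 ∧
        ∀ i, c i m = l * c i ⟨0, hd⟩ :=
      fun m => (hconn.preconnected m ⟨0, hd⟩).elim (fun w => hwalk m ⟨0, hd⟩ w)
    choose lam hlam1 hlam2 using hreach
    have hKv : ∀ (i : Fin N) (p a : Fin d), K i a p = v i p a := by
      intro i p a
      rw [hv]
      simp [mulVec_single]
    refine ⟨Matrix.of (fun a m => lam m * ψ m a), ?_, ?_⟩
    · rw [Matrix.mem_unitaryGroup_iff', Matrix.star_eq_conjTranspose]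
      ext m n
      simp only [Matrix.mul_apply, Matrix.conjTranspose_apply, Matrix.of_apply, Matrix.one_apply]
      have hstep : ∑ a, star (lam m * ψ m a) * (lam n * ψ n a)
          = (star (lam m) * lam n) * (star (ψ m) ⬝ᵥ ψ n) := by
        simp only [dotProduct, Pi.star_apply, Finset.mul_sum]
        apply Finset.sum_congr rfl; intro a _
        simp only [StarMul.star_mul]
        ring
      rw [hstep, hψdot]
      by_cases hmn : m = n
      · subst hmn
        simpa using hlam1 m
      · simp [hmn]
    · intro ρ
      ext a b
      have hL : (krausMap K ρ) a b = ∑ i, ∑ q, (∑ p, v i p a * ρ p q) * star (v i q b) := by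
        simp only [krausMap, Matrix.sum_apply, Matrix.mul_apply, Matrix.conjTranspose_apply]
        apply Finset.sum_congr rfl; intro i _
        apply Finset.sum_congr rfl; intro q _
        congr 1
        · apply Finset.sum_congr rfl; intro p _
          rw [hKv]
        · rw [hKv]
      have hR : (Matrix.of (fun a m => lam m * ψ m a) * ρ *
            (Matrix.of (fun a m => lam m * ψ m a))ᴴ) a b
          = ∑ q, (∑ p, (lam p * ψ p a) * ρ p q) * star (lam q * ψ q b) := by
        simp only [Matrix.mul_apply, Matrix.conjTranspose_apply, Matrix.of_apply]
      rw [hL, hR]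
      calc ∑ i, ∑ q, (∑ p, v i p a * ρ p q) * star (v i q b)
          = ∑ i, (star (c i ⟨0, hd⟩) * c i ⟨0, hd⟩) *
              (∑ q, (∑ p, (lam p * ψ p a) * ρ p q) * star (lam q * ψ q b)) := by
            apply Finset.sum_congr rfl; intro i _
            rw [Finset.mul_sum]
            apply Finset.sum_congr rfl; intro q _
            rw [Finset.sum_mul, Finset.sum_mul, Finset.mul_sum]
            apply Finset.sum_congr rfl; intro p _
            rw [F5 i p a, F5 i q b, hlam2 p i, hlam2 q i]
            simp only [StarMul.star_mul, star_star]
            ring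
        _ = (∑ i, star (c i ⟨0, hd⟩) * c i ⟨0, hd⟩) *
              (∑ q, (∑ p, (lam p * ψ p a) * ρ p q) * star (lam q * ψ q b)) := by
            rw [Finset.sum_mul]
        _ = ∑ q, (∑ p, (lam p * ψ p a) * ρ p q) * star (lam q * ψ q b) := by
            rw [hcnorm ⟨0, hd⟩, one_mul]
end
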